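/- Let V be a finite-dimensional complex vector space, n = dim S²V, F ∈ S⁴V̌, and H₁,…,H_n ∈ V̌ linear forms such that F = Σᵢ αᵢHᵢ⁴ with all αᵢ ≠ 0 and such that the squares H₁²,…,H_n² form a basis of S²V̌. Then the apolarity map S²V → S²V̌, G ↦ P_G(F), is an isomorphism, i.e. F is non-degenerate. -/

import Mathlib

/-- The square `H²` of a linear form `H ∈ V̌`, viewed as an element of `S²V̌`,
i.e. the quadratic form `x ↦ H(x)²` on `V`. -/
noncomputable def sqForm {V : Type*} [AddCommGroup V] [Module ℂ V]
    (H : Module.Dual ℂ V) : QuadraticForm ℂ V :=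
  QuadraticMap.sq.comp H

section Aux

open QuadraticMap Module

/-- Transport quadratic forms along a linear equivalence of the underlying spaces. -/
noncomputable def qfCongr {M M' : Type*} [AddCommGroup M] [Module ℂ M]
    [AddCommGroup M'] [Module ℂ M'] (e : M ≃ₗ[ℂ] M') :
    QuadraticForm ℂ M' ≃ₗ[ℂ] QuadraticForm ℂ M where
  toFun Q := Q.comp e.toLinearMap
  invFun Q := Q.comp e.symm.toLinearMap
  map_add' Q Q' := by ext x; simp [QuadraticMap.add_apply]
  map_smul' c Q := by ext x; simp
  left_inv Q := by ext x; simp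
  right_inv Q := by ext x; simp

instance qfFiniteDimensional (M : Type*) [AddCommGroup M] [Module ℂ M]
    [FiniteDimensional ℂ M] : FiniteDimensional ℂ (QuadraticForm ℂ M) := by
  have hinj : Function.Injective (QuadraticMap.associated (R := ℂ) (M := M) (N := ℂ)) := by
    intro Q Q' h
    have h2 := congrArg LinearMap.BilinMap.toQuadraticMap h
    rwa [QuadraticMap.toQuadraticMap_associated, QuadraticMap.toQuadraticMap_associated] at h2
  exact FiniteDimensional.of_injective _ hinj

variable {V : Type*} [AddCommGroup V] [Module ℂ V] [FiniteDimensional ℂ V]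

/-- The linear functional on quadratic forms on `V` induced by a quadratic form on the dual:
pairing of the polar forms through a basis. -/
noncomputable def evalFun (G : QuadraticForm ℂ (Module.Dual ℂ V)) :
    QuadraticForm ℂ V →ₗ[ℂ] ℂ where
  toFun Q := ∑ k, ∑ l,
    polar G ((Module.finBasis ℂ V).dualBasis k) ((Module.finBasis ℂ V).dualBasis l) *
      polar Q ((Module.finBasis ℂ V) k) ((Module.finBasis ℂ V) l)
  map_add' Q Q' := by
    simp only [QuadraticMap.coeFn_add, polar_add, mul_add, Finset.sum_add_distrib]
  map_smul' c Q := by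
    simp only [QuadraticMap.coeFn_smul, polar_smul, smul_eq_mul, RingHom.id_apply,
      Finset.mul_sum]
    congr 1; funext k; congr 1; funext l; ring

theorem evalFun_sqForm (G : QuadraticForm ℂ (Module.Dual ℂ V)) (K : Module.Dual ℂ V) :
    evalFun G (sqForm K) = 4 * G K := by
  set e := Module.finBasis ℂ V
  have hpol : ∀ k l, polar (⇑(sqForm K)) (e k) (e l) = 2 * (K (e k) * K (e l)) := by
    intro k l
    simp only [sqForm, polar, QuadraticMap.comp_apply, QuadraticMap.sq_apply, map_add]
    ring
  have hK : ∑ k, K (e k) • e.dualBasis k = K := by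
    conv_rhs => rw [← e.dualBasis.sum_repr K]
    simp
  have hbil : G.polarBilin K K
      = ∑ k, ∑ l, (K (e k) * K (e l)) *
          polar (⇑G) (e.dualBasis k) (e.dualBasis l) := by
    conv_lhs => rw [← hK]
    simp only [map_sum, LinearMap.sum_apply, LinearMap.map_smul, LinearMap.smul_apply,
      smul_eq_mul, polarBilin_apply_apply, Finset.mul_sum]
    exact Finset.sum_congr rfl fun k _ => Finset.sum_congr rfl fun l _ => by
      rw [polar_comm (⇑G)]; ring
  have hself : G.polarBilin K K = 2 * G K := by
    rw [polarBilin_apply_apply, polar_self, two_smul]; ring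
  show (∑ k, ∑ l, polar (⇑G) (e.dualBasis k) (e.dualBasis l) * polar (⇑(sqForm K)) (e k) (e l))
      = 4 * G K
  calc (∑ k, ∑ l, polar (⇑G) (e.dualBasis k) (e.dualBasis l) * polar (⇑(sqForm K)) (e k) (e l))
      = 2 * ∑ k, ∑ l, (K (e k) * K (e l)) * polar (⇑G) (e.dualBasis k) (e.dualBasis l) := by
        rw [Finset.mul_sum]
        congr 1; funext k
        rw [Finset.mul_sum]
        congr 1; funext l
        rw [hpol]; ring
    _ = 2 * (2 * G K) := by rw [← hbil, hself]
    _ = 4 * G K := by ring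

end Aux

/-- Let `V` be a finite-dimensional complex vector space,
`n = dim S²V̌`, and `F = Σᵢ αᵢHᵢ⁴ ∈ S⁴V̌` with all `αᵢ ≠ 0`, where the squares
`H₁², …, Hₙ²` form a basis of `S²V̌` (realized as quadratic forms on `V`).
Then the apolarity map of `F`, namely `G ↦ P_G(F) = Σᵢ αᵢ G(Hᵢ)·Hᵢ²` on
`S²V` (quadratic forms on `V̌`), is an isomorphism: `F` is non-degenerate. -/
theorem stmt9 {V : Type*} [AddCommGroup V] [Module ℂ V] [FiniteDimensional ℂ V]
    (n : ℕ) (hn : n = Module.finrank ℂ (QuadraticForm ℂ V))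
    (H : Fin n → Module.Dual ℂ V) (α : Fin n → ℂ) (hα : ∀ i, α i ≠ 0)
    (hind : LinearIndependent ℂ (fun i => sqForm (H i)))
    (hspan : Submodule.span ℂ (Set.range fun i => sqForm (H i)) = ⊤) :
    Function.Bijective
      (fun G : QuadraticForm ℂ (Module.Dual ℂ V) =>
        ∑ i, α i • (G (H i) • sqForm (H i))) := by
  classical
  -- the evaluation map
  set E : QuadraticForm ℂ (Module.Dual ℂ V) →ₗ[ℂ] (Fin n → ℂ) :=
    { toFun := fun G i => G (H i)
      map_add' := fun G G' => by funext i; simp [QuadraticMap.add_apply]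
      map_smul' := fun c G => by funext i; simp }
    with hE
  have hEinj : Function.Injective E := by
    rw [← LinearMap.ker_eq_bot]
    apply (Submodule.eq_bot_iff _).mpr
    intro G hG
    have hGH : ∀ i, G (H i) = 0 := fun i => congrFun hG i
    have hker : Submodule.span ℂ (Set.range fun i => sqForm (H i))
        ≤ LinearMap.ker (evalFun G) := by
      rw [Submodule.span_le]
      rintro _ ⟨i, rfl⟩
      simp only [SetLike.mem_coe, LinearMap.mem_ker, evalFun_sqForm, hGH i, mul_zero]
    rw [hspan, top_le_iff] at hker
    have hzero : ∀ K, G K = 0 := by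
      intro K
      have hmem : sqForm K ∈ LinearMap.ker (evalFun G) := hker ▸ Submodule.mem_top
      have h4 : (4 : ℂ) * G K = 0 := by
        rw [← evalFun_sqForm G K]; exact LinearMap.mem_ker.mp hmem
      have := mul_eq_zero.mp h4
      simpa using this
    ext K
    simp [hzero]
  have hdual : Module.finrank ℂ (Module.Dual ℂ V) = Module.finrank ℂ V :=
    Subspace.dual_finrank_eq
  have hfr : Module.finrank ℂ (QuadraticForm ℂ (Module.Dual ℂ V))
      = Module.finrank ℂ (QuadraticForm ℂ V) :=
    (qfCongr (LinearEquiv.ofFinrankEq _ _ hdual.symm)).finrank_eq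
  have hdim : Module.finrank ℂ (QuadraticForm ℂ (Module.Dual ℂ V))
      = Module.finrank ℂ (Fin n → ℂ) := by
    rw [hfr, ← hn, Module.finrank_fin_fun]
  have hEbij : Function.Bijective E :=
    ⟨hEinj, (LinearMap.injective_iff_surjective_of_finrank_eq_finrank hdim).mp hEinj⟩
  -- the basis of squares
  set b : Module.Basis (Fin n) ℂ (QuadraticForm ℂ V) := Module.Basis.mk hind (by rw [hspan]) with hb
  -- the diagonal scaling equivalence
  set D : (Fin n → ℂ) ≃ₗ[ℂ] (Fin n → ℂ) :=
    LinearEquiv.piCongrRight (fun i => LinearEquiv.smulOfNeZero ℂ ℂ (α i) (hα i)) with hD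
  have key : (fun G : QuadraticForm ℂ (Module.Dual ℂ V) =>
        ∑ i, α i • (G (H i) • sqForm (H i)))
      = (⇑b.equivFun.symm ∘ ⇑D ∘ ⇑E) := by
    funext G
    simp only [Function.comp_apply, Module.Basis.equivFun_symm_apply]
    refine Finset.sum_congr rfl fun i _ => ?_
    rw [hb, Module.Basis.mk_apply, smul_smul]
    rfl
  rw [key]
  exact b.equivFun.symm.bijective.comp (D.bijective.comp hEbij)
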